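/- Under the hypotheses of the deterministic drift-plus-penalty bound (L(t+1) - L(t) + V·C(t) ≤ B + V·c* for all t, L ≥ 0, L(0)=0, C(t) ≥ 0), if Q : ℕ → ℝ is a nonnegative sequence with (1/2)Q(t)^2 ≤ L(t) for all t, then lim_{T→∞} Q(T)/T = 0, i.e., Q is rate stable. -/

import Mathlib

theorem queue_rate_stable
    (L C : ℕ → ℝ) (Q : ℕ → ℝ) (V B cstar : ℝ)
    (hL : ∀ t, 0 ≤ L t) (hL0 : L 0 = 0)
    (hC : ∀ t, 0 ≤ C t) (hV : 0 < V) (hB : 0 ≤ B)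
    (hdpp : ∀ t, L (t + 1) - L t + V * C t ≤ B + V * cstar)
    (hQ : ∀ t, 0 ≤ Q t) (hQL : ∀ t, (1 / 2) * (Q t) ^ 2 ≤ L t) :
    Filter.Tendsto (fun T : ℕ => Q T / T) Filter.atTop (nhds 0) := by
  set K := B + V * cstar with hK
  have hKnn : 0 ≤ K := by
    have h0 := hdpp 0
    have := hL 1
    have := mul_nonneg hV.le (hC 0)
    nlinarith [hL 1]
  have hLT : ∀ T : ℕ, L T ≤ T * K := by
    intro T
    induction T with
    | zero => simp [hL0]
    | succ n ih =>
      have h := hdpp n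
      have := mul_nonneg hV.le (hC n)
      push_cast
      nlinarith
  have hbound : ∀ T : ℕ, 1 ≤ T → Q T / T ≤ Real.sqrt (2 * K / T) := by
    intro T hT
    have hTpos : (0:ℝ) < T := by exact_mod_cast hT
    rw [Real.le_sqrt (div_nonneg (hQ T) hTpos.le)]
    have h1 : (Q T) ^ 2 ≤ 2 * K * T := by
      have := hQL T
      have := hLT T
      nlinarith
    rw [div_pow]
    rw [div_le_div_iff₀ (by positivity) hTpos]
    calc Q T ^ 2 * T ≤ 2 * K * T * T := by nlinarith
      _ = 2 * K * (T:ℝ)^2 := by ring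
    exact div_nonneg (by linarith) hTpos.le
  have hupper : Filter.Tendsto (fun T : ℕ => Real.sqrt (2 * K / T))
      Filter.atTop (nhds 0) := by
    have h1 : Filter.Tendsto (fun T : ℕ => 2 * K / (T:ℝ)) Filter.atTop (nhds 0) :=
      tendsto_const_div_atTop_nhds_zero_nat (2 * K)
    have := (Real.continuous_sqrt.tendsto 0).comp h1
    simpa only [Function.comp_def, Real.sqrt_zero] using this
  refine tendsto_of_tendsto_of_tendsto_of_le_of_le' tendsto_const_nhds hupper ?_ ?_
  · filter_upwards [Filter.eventually_ge_atTop 1] with T hT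
    have hTpos : (0:ℝ) < T := by exact_mod_cast hT
    exact div_nonneg (hQ T) hTpos.le
  · filter_upwards [Filter.eventually_ge_atTop 1] with T hT
    exact hbound T hT
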